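/- arXiv:1510.02533 — 3 statements merged into one kernel-verified Lean document; each statement's English description precedes it below -/
import Mathlib

section
/- Fix constants α ≥ 2 and β ≥ 2 satisfying 2/α − 1/α² − β + β/α ≤ 0, and assume the big-data condition n ≥ βL/μ. Let φ_1, …, φ_n ∈ ℝ^d be arbitrary, let w and T be the associated Finito point and Lyapunov value, and for each index j ∈ {1,…,n} let T^(j) denote the Lyapunov value computed after the Finito update with index j (table with φ_j replaced by w, and the correspondingly recomputed point w^(j)). Then (1/n)∑_{j=1}^n T^(j) − T ≤ −(1/(αn)) T. -/
open scoped RealInnerProductSpace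

/-- The Finito point associated with a table `φ`. -/
noncomputable def finitoW (d n : ℕ) (α μ : ℝ)
    (f' : Fin n → EuclideanSpace ℝ (Fin d) → EuclideanSpace ℝ (Fin d))
    (φ : Fin n → EuclideanSpace ℝ (Fin d)) : EuclideanSpace ℝ (Fin d) :=
  (1 / (n : ℝ)) • ∑ i, φ i - (1 / (α * μ * n)) • ∑ i, f' i (φ i)

/-- The Finito Lyapunov value associated with a table `φ`. -/
noncomputable def finitoT (d n : ℕ) (α μ : ℝ)
    (f : Fin n → EuclideanSpace ℝ (Fin d) → ℝ)
    (f' : Fin n → EuclideanSpace ℝ (Fin d) → EuclideanSpace ℝ (Fin d))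
    (φ : Fin n → EuclideanSpace ℝ (Fin d)) : ℝ :=
  (1 / (n : ℝ)) * ∑ i, f i ((1 / (n : ℝ)) • ∑ i', φ i')
    - (1 / (n : ℝ)) * ∑ i, f i (φ i)
    - (1 / (n : ℝ)) * ∑ i, ⟪f' i (φ i), finitoW d n α μ f' φ - φ i⟫
    - (μ / (2 * n)) * ∑ i, ‖finitoW d n α μ f' φ - φ i‖ ^ 2
    + (μ / (2 * n)) * ∑ i, ‖(1 / (n : ℝ)) • ∑ i', φ i' - φ i‖ ^ 2

variable {dd : ℕ}

/-- Descent lemma: an `L`-smooth differentiable function satisfies the quadratic upper bound. -/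
lemma finito_descent {f : EuclideanSpace ℝ (Fin dd) → ℝ}
    {f' : EuclideanSpace ℝ (Fin dd) → EuclideanSpace ℝ (Fin dd)} {L : ℝ} (hL : 0 ≤ L)
    (hgrad : ∀ x, HasGradientAt f (f' x) x)
    (hlip : ∀ x y, ‖f' x - f' y‖ ≤ L * ‖x - y‖) (x y : EuclideanSpace ℝ (Fin dd)) :
    f x ≤ f y + ⟪f' y, x - y⟫ + L / 2 * ‖x - y‖ ^ 2 := by
  set c : ℝ → EuclideanSpace ℝ (Fin dd) := fun t => y + t • (x - y) with hc
  have hcd : ∀ t : ℝ, HasDerivAt c (x - y) t := by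
    intro t
    have h1 : HasDerivAt (fun t : ℝ => t • (x - y)) ((1:ℝ) • (x - y)) t :=
      (hasDerivAt_id t).smul_const (x - y)
    have h3 := h1.const_add y
    rw [one_smul] at h3
    exact h3
  have hgd : ∀ t : ℝ, HasDerivAt (fun s => f (c s)) ⟪f' (c t), x - y⟫ t := by
    intro t
    have h2 := (hgrad (c t)).hasFDerivAt.comp_hasDerivAt t (hcd t)
    have h3 : HasDerivAt (fun s => f (c s)) ((InnerProductSpace.toDual ℝ _ (f' (c t))) (x - y)) t := h2
    rw [InnerProductSpace.toDual_apply_apply] at h3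
    exact h3
  have hlipC : LipschitzWith (Real.toNNReal L) f' := by
    apply LipschitzWith.of_dist_le_mul
    intro a b
    rw [dist_eq_norm, dist_eq_norm, Real.coe_toNNReal L hL]
    exact hlip a b
  have hcont : Continuous fun t : ℝ => ⟪f' (c t), x - y⟫ := by
    apply Continuous.inner
    · exact hlipC.continuous.comp (continuous_const.add (continuous_id.smul continuous_const))
    · exact continuous_const
  have hint : IntervalIntegrable (fun t : ℝ => ⟪f' (c t), x - y⟫) MeasureTheory.volume 0 1 :=
    hcont.intervalIntegrable 0 1
  have hftc : (∫ t in (0:ℝ)..1, ⟪f' (c t), x - y⟫) = f (c 1) - f (c 0) :=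
    intervalIntegral.integral_eq_sub_of_hasDerivAt (fun t _ => hgd t) hint
  have hc0 : c 0 = y := by simp [hc]
  have hc1 : c 1 = x := by simp [hc]
  have hub : ∀ t ∈ Set.Icc (0:ℝ) 1, ⟪f' (c t), x - y⟫ ≤ ⟪f' y, x - y⟫ + t * (L * ‖x - y‖ ^ 2) := by
    intro t ht
    have h3 : ⟪f' (c t) - f' y, x - y⟫ ≤ ‖f' (c t) - f' y‖ * ‖x - y‖ := real_inner_le_norm _ _
    have h4 : ‖f' (c t) - f' y‖ ≤ L * ‖c t - y‖ := hlip _ _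
    have h5 : ‖c t - y‖ = t * ‖x - y‖ := by
      have : c t - y = t • (x - y) := by simp [hc]
      rw [this, norm_smul, Real.norm_eq_abs, abs_of_nonneg ht.1]
    have h6 : ⟪f' (c t) - f' y, x - y⟫ = ⟪f' (c t), x - y⟫ - ⟪f' y, x - y⟫ := by
      rw [inner_sub_left]
    have h7 : ‖f' (c t) - f' y‖ * ‖x - y‖ ≤ L * (t * ‖x - y‖) * ‖x - y‖ := by
      apply mul_le_mul_of_nonneg_right _ (norm_nonneg _)
      rw [← h5]; exact h4
    nlinarith [norm_nonneg (x - y)]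
  have hintu : IntervalIntegrable (fun t : ℝ => ⟪f' y, x - y⟫ + t * (L * ‖x - y‖ ^ 2))
      MeasureTheory.volume 0 1 :=
    (continuous_const.add (continuous_id.mul continuous_const)).intervalIntegrable 0 1
  have hmono := intervalIntegral.integral_mono_on (by norm_num : (0:ℝ) ≤ 1) hint hintu hub
  have hval : (∫ t in (0:ℝ)..1, (⟪f' y, x - y⟫ + t * (L * ‖x - y‖ ^ 2)))
      = ⟪f' y, x - y⟫ + L / 2 * ‖x - y‖ ^ 2 := by
    have hi1 : IntervalIntegrable (fun _ : ℝ => ⟪f' y, x - y⟫) MeasureTheory.volume 0 1 :=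
      intervalIntegrable_const
    have hi2 : IntervalIntegrable (fun t : ℝ => t * (L * ‖x - y‖ ^ 2)) MeasureTheory.volume 0 1 :=
      (continuous_id'.mul continuous_const).intervalIntegrable 0 1
    rw [intervalIntegral.integral_add hi1 hi2]
    rw [intervalIntegral.integral_const]
    rw [intervalIntegral.integral_mul_const, integral_id]
    norm_num; ring
  rw [hftc, hc0, hc1] at hmono
  rw [hval] at hmono
  linarith

/-- Co-coercivity relative to strong convexity. -/
lemma finito_coco {f : EuclideanSpace ℝ (Fin dd) → ℝ}
    {f' : EuclideanSpace ℝ (Fin dd) → EuclideanSpace ℝ (Fin dd)} {L μ : ℝ}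
    (hμ : 0 < μ) (hμL : μ ≤ L)
    (hgrad : ∀ x, HasGradientAt f (f' x) x)
    (hlip : ∀ x y, ‖f' x - f' y‖ ≤ L * ‖x - y‖)
    (hsc : ∀ x y, f x ≥ f y + ⟪f' y, x - y⟫ + μ / 2 * ‖x - y‖ ^ 2)
    (x y : EuclideanSpace ℝ (Fin dd)) :
    ‖f' x - f' y - μ • (x - y)‖ ^ 2
      ≤ 2 * (L - μ) * (f x - f y - ⟪f' y, x - y⟫ - μ / 2 * ‖x - y‖ ^ 2) := by
  have hmono : μ * ‖x - y‖ ^ 2 ≤ ⟪f' x - f' y, x - y⟫ := by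
    have h1 := hsc x y
    have h2 := hsc y x
    have e1 : ⟪f' x, y - x⟫ = -⟪f' x, x - y⟫ := by
      have : y - x = -(x - y) := by abel
      rw [this, inner_neg_right]
    have e2 : ‖y - x‖ = ‖x - y‖ := norm_sub_rev _ _
    have e3 : ⟪f' x - f' y, x - y⟫ = ⟪f' x, x - y⟫ - ⟪f' y, x - y⟫ := inner_sub_left _ _ _
    rw [e1, e2] at h2
    linarith
  have hexp : ‖f' x - f' y - μ • (x - y)‖ ^ 2
      = ‖f' x - f' y‖ ^ 2 - 2 * (μ * ⟪f' x - f' y, x - y⟫) + μ ^ 2 * ‖x - y‖ ^ 2 := by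
    rw [norm_sub_sq_real, real_inner_smul_right, norm_smul, Real.norm_eq_abs]
    rw [mul_pow, sq_abs]
  rcases eq_or_lt_of_le hμL with heq | hlt
  · -- L = μ case : left side is zero
    subst heq
    have hΔ : ‖f' x - f' y‖ ≤ μ * ‖x - y‖ := hlip x y
    have h1 := hsc x y
    nlinarith [norm_nonneg (f' x - f' y), norm_nonneg (x - y),
      mul_le_mul hΔ hΔ (norm_nonneg _) (by positivity)]
  · set t : ℝ := (L - μ)⁻¹ with htdef
    have hLμ : 0 < L - μ := sub_pos.mpr hlt
    have ht : (L - μ) * t = 1 := mul_inv_cancel₀ (ne_of_gt hLμ)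
    set g : EuclideanSpace ℝ (Fin dd) := f' x - f' y - μ • (x - y) with hgdef
    set z : EuclideanSpace ℝ (Fin dd) := x - t • g with hzdef
    have h1 := hsc z y
    have h2 := finito_descent (le_trans hμ.le hμL) hgrad hlip z x
    have ezx : z - x = -(t • g) := by rw [hzdef]; abel
    have ezy : z - y = (x - y) - t • g := by rw [hzdef]; abel
    have e4 : ⟪f' x, z - x⟫ = -(t * ⟪f' x, g⟫) := by
      rw [ezx, inner_neg_right, real_inner_smul_right]
    have e5 : ‖z - x‖ ^ 2 = t ^ 2 * ‖g‖ ^ 2 := by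
      rw [ezx, norm_neg, norm_smul, Real.norm_eq_abs, mul_pow, sq_abs]
    have e6 : ⟪f' y, z - y⟫ = ⟪f' y, x - y⟫ - t * ⟪f' y, g⟫ := by
      rw [ezy, inner_sub_right, real_inner_smul_right]
    have e7 : ‖z - y‖ ^ 2 = ‖x - y‖ ^ 2 - 2 * (t * ⟪x - y, g⟫) + t ^ 2 * ‖g‖ ^ 2 := by
      rw [ezy, norm_sub_sq_real, real_inner_smul_right, norm_smul, Real.norm_eq_abs,
        mul_pow, sq_abs]
    have eg : ⟪f' x, g⟫ - ⟪f' y, g⟫ - μ * ⟪x - y, g⟫ = ‖g‖ ^ 2 := by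
      have h9 : (⟪g, g⟫ : ℝ) = ⟪f' x, g⟫ - ⟪f' y, g⟫ - μ * ⟪x - y, g⟫ := by
        nth_rewrite 1 [hgdef]
        rw [inner_sub_left, inner_sub_left, real_inner_smul_left]
      rw [← real_inner_self_eq_norm_sq, h9]
    have ht2 : (L - μ) * t ^ 2 = t := by
      rw [sq]; rw [← mul_assoc, ht, one_mul]
    rw [e6, e7] at h1
    rw [e4, e5] at h2
    have egt : t * ⟪f' x, g⟫ - t * ⟪f' y, g⟫ - t * (μ * ⟪x - y, g⟫) = t * ‖g‖ ^ 2 := by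
      linear_combination t * eg
    have ht2G : L / 2 * (t ^ 2 * ‖g‖ ^ 2) - μ / 2 * (t ^ 2 * ‖g‖ ^ 2) = t / 2 * ‖g‖ ^ 2 := by
      linear_combination (‖g‖ ^ 2 / 2) * ht2
    have hBge : t / 2 * ‖g‖ ^ 2 ≤ f x - f y - ⟪f' y, x - y⟫ - μ / 2 * ‖x - y‖ ^ 2 := by
      linarith [h1, h2, egt, ht2G]
    have hfin := mul_le_mul_of_nonneg_left hBge (by linarith : (0:ℝ) ≤ 2 * (L - μ))
    have hval : 2 * (L - μ) * (t / 2 * ‖g‖ ^ 2) = ‖g‖ ^ 2 := by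
      linear_combination ‖g‖ ^ 2 * ht
    linarith

lemma finito_sum_update {n : ℕ} {X M : Type*} [AddCommGroup M]
    (φ : Fin n → X) (j : Fin n) (w : X) (g : Fin n → X → M) :
    ∑ i, g i (Function.update φ j w i) = (∑ i, g i (φ i)) + (g j w - g j (φ j)) := by
  classical
  rw [← Finset.sum_erase_add _ _ (Finset.mem_univ j)]
  rw [← Finset.sum_erase_add Finset.univ (fun i => g i (φ i)) (Finset.mem_univ j)]
  rw [Function.update_self]
  have h : ∑ i ∈ Finset.univ.erase j, g i (Function.update φ j w i)
      = ∑ i ∈ Finset.univ.erase j, g i (φ i) := by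
    apply Finset.sum_congr rfl
    intro i hi
    rw [Function.update_of_ne (Finset.ne_of_mem_erase hi)]
  rw [h]; abel

/-- Lemma A : decomposition of the Lyapunov value. -/
lemma finitoT_eq (d n : ℕ) (hn : 1 ≤ n) (μ α : ℝ) (hμ : μ ≠ 0) (hα : α ≠ 0)
    (f : Fin n → EuclideanSpace ℝ (Fin d) → ℝ)
    (f' : Fin n → EuclideanSpace ℝ (Fin d) → EuclideanSpace ℝ (Fin d))
    (ψ : Fin n → EuclideanSpace ℝ (Fin d)) :
    finitoT d n α μ f f' ψ
      = (1 / (n : ℝ)) * ∑ i, (f i ((1 / (n : ℝ)) • ∑ i', ψ i') - f i (ψ i)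
          - ⟪f' i (ψ i), (1 / (n : ℝ)) • ∑ i', ψ i' - ψ i⟫)
        + (2 / α - 1 / α ^ 2) / (2 * μ * (n : ℝ) ^ 2) * ‖∑ i, f' i (ψ i)‖ ^ 2 := by
  have hN : (0:ℝ) < (n:ℝ) := by exact_mod_cast Nat.lt_of_lt_of_le Nat.zero_lt_one hn
  have hNe : (n:ℝ) ≠ 0 := ne_of_gt hN
  set B : EuclideanSpace ℝ (Fin d) := (1 / (n:ℝ)) • ∑ i', ψ i' with hB
  set S : EuclideanSpace ℝ (Fin d) := ∑ i, f' i (ψ i) with hS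
  set u : EuclideanSpace ℝ (Fin d) := -((1 / (α * μ * (n:ℝ))) • S) with hu
  have hW : finitoW d n α μ f' ψ = B + u := by
    rw [finitoW, hu, hB, hS, sub_eq_add_neg]
  have hsum0 : ∑ i, (B - ψ i) = 0 := by
    rw [Finset.sum_sub_distrib, Finset.sum_const, Finset.card_univ, Fintype.card_fin]
    rw [hB, ← Nat.cast_smul_eq_nsmul ℝ, smul_smul]
    rw [mul_one_div, div_self hNe, one_smul, sub_self]
  have ha : ∀ i, finitoW d n α μ f' ψ - ψ i = (B - ψ i) + u := by
    intro i; rw [hW]; abel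
  have hinner : ∑ i, ⟪f' i (ψ i), finitoW d n α μ f' ψ - ψ i⟫
      = (∑ i, ⟪f' i (ψ i), B - ψ i⟫) + ⟪S, u⟫ := by
    have : ∀ i, ⟪f' i (ψ i), finitoW d n α μ f' ψ - ψ i⟫
        = ⟪f' i (ψ i), B - ψ i⟫ + ⟪f' i (ψ i), u⟫ := by
      intro i; rw [ha i, inner_add_right]
    rw [Finset.sum_congr rfl (fun i _ => this i), Finset.sum_add_distrib, hS, sum_inner]
  have hnormsum : ∑ i, ‖finitoW d n α μ f' ψ - ψ i‖ ^ 2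
      = (∑ i, ‖B - ψ i‖ ^ 2) + (n:ℝ) * ‖u‖ ^ 2 := by
    have h1 : ∀ i, ‖finitoW d n α μ f' ψ - ψ i‖ ^ 2
        = ‖B - ψ i‖ ^ 2 + 2 * ⟪B - ψ i, u⟫ + ‖u‖ ^ 2 := by
      intro i; rw [ha i, norm_add_sq_real]
    rw [Finset.sum_congr rfl (fun i _ => h1 i)]
    rw [Finset.sum_add_distrib, Finset.sum_add_distrib, ← Finset.mul_sum]
    rw [← sum_inner, hsum0, inner_zero_left, Finset.sum_const, Finset.card_univ,
      Fintype.card_fin, nsmul_eq_mul]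
    ring
  have hSu : ⟪S, u⟫ = -((1 / (α * μ * (n:ℝ))) * ‖S‖ ^ 2) := by
    rw [hu, inner_neg_right, real_inner_smul_right, real_inner_self_eq_norm_sq]
  have huN : ‖u‖ ^ 2 = (1 / (α * μ * (n:ℝ))) ^ 2 * ‖S‖ ^ 2 := by
    rw [hu, norm_neg, norm_smul, Real.norm_eq_abs, mul_pow, sq_abs]
  show (1 / (n : ℝ)) * ∑ i, f i B - (1 / (n : ℝ)) * ∑ i, f i (ψ i)
      - (1 / (n : ℝ)) * ∑ i, ⟪f' i (ψ i), finitoW d n α μ f' ψ - ψ i⟫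
      - (μ / (2 * n)) * ∑ i, ‖finitoW d n α μ f' ψ - ψ i‖ ^ 2
      + (μ / (2 * n)) * ∑ i, ‖B - ψ i‖ ^ 2 = _
  rw [hinner, hnormsum, hSu, huN]
  rw [Finset.sum_sub_distrib, Finset.sum_sub_distrib]
  field_simp
  ring

set_option maxHeartbeats 3200000 in
theorem finito_lyapunov_one_step (d n : ℕ) (hn : 1 ≤ n) (μ L α β : ℝ)
    (hμ : 0 < μ) (hμL : μ ≤ L) (hα : 2 ≤ α) (hβ : 2 ≤ β)
    (hcond : 2 / α - 1 / α ^ 2 - β + β / α ≤ 0)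
    (hbig : β * L / μ ≤ (n : ℝ))
    (f : Fin n → EuclideanSpace ℝ (Fin d) → ℝ)
    (f' : Fin n → EuclideanSpace ℝ (Fin d) → EuclideanSpace ℝ (Fin d))
    (hgrad : ∀ i x, HasGradientAt (f i) (f' i x) x)
    (hsmooth : ∀ i x y, ‖f' i x - f' i y‖ ≤ L * ‖x - y‖)
    (hsc : ∀ i x y, f i x ≥ f i y + ⟪f' i y, x - y⟫ + μ / 2 * ‖x - y‖ ^ 2)
    (φ : Fin n → EuclideanSpace ℝ (Fin d)) :
    (1 / (n : ℝ)) * ∑ j, finitoT d n α μ f f'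
        (Function.update φ j (finitoW d n α μ f' φ))
      - finitoT d n α μ f f' φ
      ≤ -(1 / (α * n)) * finitoT d n α μ f f' φ := by
  have hN : (0:ℝ) < (n:ℝ) := by exact_mod_cast Nat.lt_of_lt_of_le Nat.zero_lt_one hn
  have hNe : (n:ℝ) ≠ 0 := ne_of_gt hN
  have hα0 : (0:ℝ) < α := by linarith
  have hαe : α ≠ 0 := ne_of_gt hα0
  have hμe : μ ≠ 0 := ne_of_gt hμ
  have hL0 : (0:ℝ) < L := lt_of_lt_of_le hμ hμL
  set w : EuclideanSpace ℝ (Fin d) := finitoW d n α μ f' φ with hwdef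
  set bar : EuclideanSpace ℝ (Fin d) := (1 / (n:ℝ)) • ∑ i, φ i with hbar
  set Sg : EuclideanSpace ℝ (Fin d) := ∑ i, f' i (φ i) with hSgdef
  set Sfb : EuclideanSpace ℝ (Fin d) := ∑ i, f' i bar with hSfb
  set Sh : EuclideanSpace ℝ (Fin d) := ∑ i, f' i w with hSh
  have hw : w = bar - (1 / (α * μ * (n:ℝ))) • Sg := by
    rw [hwdef, finitoW, hbar, hSgdef]
  have hwb : w - bar = -((1 / (α * μ * (n:ℝ))) • Sg) := by rw [hw]; abel
  have hbw : bar - w = (1 / (α * μ * (n:ℝ))) • Sg := by rw [hw]; abel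
  set SFbar : ℝ := ∑ i, f i bar with hSFbar
  set SF : ℝ := ∑ i, f i (φ i) with hSF
  set SFw : ℝ := ∑ i, f i w with hSFw
  set q1 : ℝ := ∑ i, (⟪f' i (φ i), bar - φ i⟫ : ℝ) with hq1
  set q2 : ℝ := ∑ i, (⟪f' i w, w - φ i⟫ : ℝ) with hq2
  set q6 : ℝ := ∑ i, (⟪f' i (φ i), w - φ i⟫ : ℝ) with hq6
  set p4 : ℝ := (⟪Sh, Sg⟫ : ℝ) with hp4
  set p5 : ℝ := (⟪Sfb, Sg⟫ : ℝ) with hp5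
  set E2 : ℝ := ‖Sg‖^2 with hE2
  set SD : ℝ := ∑ i, ‖w - φ i‖^2 with hSD
  set Y : ℝ := ∑ i, ‖f' i w - f' i (φ i)‖^2 with hYdef
  set Z : ℝ := ∑ i, ‖f' i w - f' i (φ i) - μ • (w - φ i)‖^2 with hZdef
  -- scalar conversions
  have eSgwb : (⟪Sg, w - bar⟫ : ℝ) = -((1 / (α * μ * (n:ℝ))) * E2) := by
    rw [hwb, inner_neg_right, real_inner_smul_right, real_inner_self_eq_norm_sq, ← hE2]
  have eShbw : (⟪Sh, bar - w⟫ : ℝ) = (1 / (α * μ * (n:ℝ))) * p4 := by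
    rw [hbw, real_inner_smul_right, ← hp4]
  have eSfbwb : (⟪Sfb, w - bar⟫ : ℝ) = -((1 / (α * μ * (n:ℝ))) * p5) := by
    rw [hwb, inner_neg_right, real_inner_smul_right, ← hp5]
  have enbw : ‖bar - w‖^2 = (1 / (α * μ * (n:ℝ)))^2 * E2 := by
    rw [hbw, norm_smul, Real.norm_eq_abs, mul_pow, sq_abs, ← hE2]
  have enwb : ‖w - bar‖^2 = (1 / (α * μ * (n:ℝ)))^2 * E2 := by
    rw [norm_sub_rev]; exact enbw
  -- Lyapunov value at φ
  have hT : finitoT d n α μ f f' φ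
      = (1/(n:ℝ)) * (SFbar - SF - q1) + (2/α - 1/α^2)/(2*μ*(n:ℝ)^2) * E2 := by
    rw [finitoT_eq d n hn μ α hμe hαe f f' φ]
    rw [← hbar, ← hSgdef, ← hE2]
    rw [Finset.sum_sub_distrib, Finset.sum_sub_distrib, ← hSFbar, ← hSF, ← hq1]
  -- summed strong convexity instances
  have hJ1 : SFw + (1 / (α * μ * (n:ℝ))) * p4
      + (n:ℝ) * (μ/2 * ((1 / (α * μ * (n:ℝ)))^2 * E2)) ≤ SFbar := by
    have h1 := Finset.sum_le_sum
      (fun i (_ : i ∈ Finset.univ) => (hsc i bar w : _ ≥ _).le)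
    rw [Finset.sum_add_distrib, Finset.sum_add_distrib, ← hSFw, ← hSFbar,
      ← sum_inner, ← hSh, Finset.sum_const, Finset.card_univ, Fintype.card_fin,
      nsmul_eq_mul] at h1
    rw [eShbw, enbw] at h1
    linarith
  have hJ2 : SFbar - (1 / (α * μ * (n:ℝ))) * p5
      + (n:ℝ) * (μ/2 * ((1 / (α * μ * (n:ℝ)))^2 * E2)) ≤ SFw := by
    have h1 := Finset.sum_le_sum
      (fun i (_ : i ∈ Finset.univ) => (hsc i w bar : _ ≥ _).le)
    rw [Finset.sum_add_distrib, Finset.sum_add_distrib, ← hSFw, ← hSFbar,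
      ← sum_inner, ← hSfb, Finset.sum_const, Finset.card_univ, Fintype.card_fin,
      nsmul_eq_mul] at h1
    rw [eSfbwb, enwb] at h1
    linarith
  have hJ3 : SF + q6 + μ/2 * SD ≤ SFw := by
    have h1 := Finset.sum_le_sum
      (fun i (_ : i ∈ Finset.univ) => (hsc i w (φ i) : _ ≥ _).le)
    rw [Finset.sum_add_distrib, Finset.sum_add_distrib, ← hSF, ← hSFw, ← hq6,
      ← Finset.mul_sum, ← hSD] at h1
    linarith
  have hJ4 : SFw - q2 + μ/2 * SD ≤ SF := by
    have h0 : ∀ i : Fin n, f i w - ⟪f' i w, w - φ i⟫ + μ/2 * ‖w - φ i‖^2 ≤ f i (φ i) := by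
      intro i
      have h := hsc i (φ i) w
      rw [show φ i - w = -(w - φ i) by abel, inner_neg_right, norm_neg] at h
      linarith
    have h1 := Finset.sum_le_sum (fun i (_ : i ∈ Finset.univ) => h0 i)
    rw [Finset.sum_add_distrib, Finset.sum_sub_distrib, ← hSFw, ← hSF, ← hq2,
      ← Finset.mul_sum, ← hSD] at h1
    linarith
  have hJ5 : Z ≤ 2*(L-μ) * (SFw - SF - q6 - μ/2 * SD) := by
    have h0 : ∀ i : Fin n, ‖f' i w - f' i (φ i) - μ • (w - φ i)‖^2
        ≤ 2*(L-μ) * (f i w - f i (φ i) - ⟪f' i (φ i), w - φ i⟫ - μ/2 * ‖w - φ i‖^2) :=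
      fun i => finito_coco hμ hμL (hgrad i) (hsmooth i) (hsc i) w (φ i)
    have h1 := Finset.sum_le_sum (fun i (_ : i ∈ Finset.univ) => h0 i)
    rw [← Finset.mul_sum, Finset.sum_sub_distrib, Finset.sum_sub_distrib,
      Finset.sum_sub_distrib, ← hSFw, ← hSF, ← hq6, ← Finset.mul_sum, ← hSD] at h1
    exact h1
  have hq6id : q6 = q1 - (1 / (α * μ * (n:ℝ))) * E2 := by
    have h0 : ∀ i : Fin n, (⟪f' i (φ i), w - φ i⟫ : ℝ)
        = ⟪f' i (φ i), bar - φ i⟫ + ⟪f' i (φ i), w - bar⟫ := by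
      intro i; rw [← inner_add_right]; congr 1; abel
    rw [hq6, Finset.sum_congr rfl (fun i _ => h0 i), Finset.sum_add_distrib, ← hq1,
      ← sum_inner, ← hSgdef, eSgwb]
    ring
  have hYid : Y = Z + 2*μ*(q2 - q6) - μ^2 * SD := by
    have h0 : ∀ i : Fin n, ‖f' i w - f' i (φ i)‖^2
        = ‖f' i w - f' i (φ i) - μ • (w - φ i)‖^2
          + 2*μ*(⟪f' i w, w - φ i⟫ - ⟪f' i (φ i), w - φ i⟫) - μ^2 * ‖w - φ i‖^2 := by
      intro i
      rw [norm_sub_sq_real (f' i w - f' i (φ i)) (μ • (w - φ i)), real_inner_smul_right,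
        inner_sub_left, norm_smul, Real.norm_eq_abs, mul_pow, sq_abs]
      ring
    rw [hYdef, Finset.sum_congr rfl (fun i _ => h0 i), Finset.sum_sub_distrib,
      Finset.sum_add_distrib, ← hZdef, ← Finset.mul_sum, ← Finset.mul_sum,
      Finset.sum_sub_distrib, ← hq2, ← hq6, ← hSD]
  have hSD0 : (0:ℝ) ≤ SD := by
    rw [hSD]; exact Finset.sum_nonneg (fun i _ => by positivity)
  have hvsum : ∑ j, ((1/(n:ℝ)) • (w - φ j)) = w - bar := by
    rw [← Finset.smul_sum, Finset.sum_sub_distrib, Finset.sum_const, Finset.card_univ,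
      Fintype.card_fin, smul_sub, ← Nat.cast_smul_eq_nsmul ℝ, smul_smul,
      one_div, inv_mul_cancel₀ hNe, one_smul]
    rw [hbar, one_div]
  -- the per--update bound
  have hTj : ∀ j : Fin n, finitoT d n α μ f f' (Function.update φ j w)
      ≤ (1/(n:ℝ))*SFbar - (1/(n:ℝ))*SF - (1/(n:ℝ))*q1
        + (1/(n:ℝ)) * ⟪Sfb, (1/(n:ℝ)) • (w - φ j)⟫
        - (1/(n:ℝ)) * ⟪Sg, (1/(n:ℝ)) • (w - φ j)⟫
        + (L/(2*(n:ℝ)^2)) * ‖w - φ j‖^2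
        - (1/(n:ℝ)) * (f j w - f j (φ j))
        - (1/(n:ℝ)) * (⟪f' j w, bar - w⟫ : ℝ)
        - (1/(n:ℝ)) * (⟪f' j w, (1/(n:ℝ)) • (w - φ j)⟫ : ℝ)
        + (1/(n:ℝ)) * (⟪f' j (φ j), bar - φ j⟫ : ℝ)
        + (1/(n:ℝ)) * (⟪f' j (φ j), (1/(n:ℝ)) • (w - φ j)⟫ : ℝ)
        + (2/α - 1/α^2)/(2*μ*(n:ℝ)^2) * ‖Sg + (f' j w - f' j (φ j))‖^2 := by
    intro j
    have hU1 : ∑ i, Function.update φ j w i = (∑ i, φ i) + (w - φ j) :=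
      finito_sum_update φ j w (fun _ x => x)
    have hbarj : (1 / (n:ℝ)) • ∑ i, Function.update φ j w i
        = bar + (1/(n:ℝ)) • (w - φ j) := by
      rw [hU1, smul_add, ← hbar]
    have hfsum : ∑ i, f i (Function.update φ j w i) = SF + (f j w - f j (φ j)) := by
      have h := finito_sum_update φ j w f
      rw [h, ← hSF]
    have hSgj : ∑ i, f' i (Function.update φ j w i) = Sg + (f' j w - f' j (φ j)) := by
      have h := finito_sum_update φ j w f'
      rw [h, ← hSgdef]
    have hinnersum : ∑ i, (⟪f' i (Function.update φ j w i),
          (bar + (1/(n:ℝ)) • (w - φ j)) - Function.update φ j w i⟫ : ℝ)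
        = (q1 + ⟪Sg, (1/(n:ℝ)) • (w - φ j)⟫)
          + ((⟪f' j w, (bar + (1/(n:ℝ)) • (w - φ j)) - w⟫ : ℝ)
             - (⟪f' j (φ j), (bar + (1/(n:ℝ)) • (w - φ j)) - φ j⟫ : ℝ)) := by
      have h : ∑ i, (⟪f' i (Function.update φ j w i),
            (bar + (1/(n:ℝ)) • (w - φ j)) - Function.update φ j w i⟫ : ℝ)
          = (∑ i, (⟪f' i (φ i), (bar + (1/(n:ℝ)) • (w - φ j)) - φ i⟫ : ℝ))
            + ((⟪f' j w, (bar + (1/(n:ℝ)) • (w - φ j)) - w⟫ : ℝ)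
               - (⟪f' j (φ j), (bar + (1/(n:ℝ)) • (w - φ j)) - φ j⟫ : ℝ)) :=
        finito_sum_update φ j w
          (fun i x => (⟪f' i x, (bar + (1/(n:ℝ)) • (w - φ j)) - x⟫ : ℝ))
      rw [h]
      congr 1
      have h0 : ∀ i : Fin n, (⟪f' i (φ i), (bar + (1/(n:ℝ)) • (w - φ j)) - φ i⟫ : ℝ)
          = ⟪f' i (φ i), bar - φ i⟫ + ⟪f' i (φ i), (1/(n:ℝ)) • (w - φ j)⟫ := by
        intro i; rw [← inner_add_right]; congr 1; abel
      rw [Finset.sum_congr rfl (fun i _ => h0 i), Finset.sum_add_distrib, ← hq1,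
        ← sum_inner, ← hSgdef]
    have hdesc : ∑ i, f i (bar + (1/(n:ℝ)) • (w - φ j))
        ≤ SFbar + ⟪Sfb, (1/(n:ℝ)) • (w - φ j)⟫
          + (n:ℝ) * (L/2 * ‖(1/(n:ℝ)) • (w - φ j)‖^2) := by
      have h0 : ∀ i : Fin n, f i (bar + (1/(n:ℝ)) • (w - φ j))
          ≤ f i bar + ⟪f' i bar, (1/(n:ℝ)) • (w - φ j)⟫
            + L/2 * ‖(1/(n:ℝ)) • (w - φ j)‖^2 := by
        intro i
        have h := finito_descent hL0.le (hgrad i) (hsmooth i)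
          (bar + (1/(n:ℝ)) • (w - φ j)) bar
        simpa [add_sub_cancel_left] using h
      have h1 := Finset.sum_le_sum (fun i (_ : i ∈ Finset.univ) => h0 i)
      rw [Finset.sum_add_distrib, Finset.sum_add_distrib, ← hSFbar, ← sum_inner, ← hSfb,
        Finset.sum_const, Finset.card_univ, Fintype.card_fin, nsmul_eq_mul] at h1
      exact h1
    have hTeq := finitoT_eq d n hn μ α hμe hαe f f' (Function.update φ j w)
    rw [hSgj, hbarj, Finset.sum_sub_distrib, Finset.sum_sub_distrib, hfsum,
      hinnersum] at hTeq
    rw [hTeq]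
    have hstep : (1/(n:ℝ)) * ((∑ i, f i (bar + (1/(n:ℝ)) • (w - φ j)))
          - (SF + (f j w - f j (φ j)))
          - ((q1 + ⟪Sg, (1/(n:ℝ)) • (w - φ j)⟫)
            + ((⟪f' j w, (bar + (1/(n:ℝ)) • (w - φ j)) - w⟫ : ℝ)
               - (⟪f' j (φ j), (bar + (1/(n:ℝ)) • (w - φ j)) - φ j⟫ : ℝ))))
        ≤ (1/(n:ℝ)) * ((SFbar + ⟪Sfb, (1/(n:ℝ)) • (w - φ j)⟫
            + (n:ℝ) * (L/2 * ‖(1/(n:ℝ)) • (w - φ j)‖^2))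
          - (SF + (f j w - f j (φ j)))
          - ((q1 + ⟪Sg, (1/(n:ℝ)) • (w - φ j)⟫)
            + ((⟪f' j w, (bar + (1/(n:ℝ)) • (w - φ j)) - w⟫ : ℝ)
               - (⟪f' j (φ j), (bar + (1/(n:ℝ)) • (w - φ j)) - φ j⟫ : ℝ)))) := by
      apply mul_le_mul_of_nonneg_left _ (by positivity : (0:ℝ) ≤ 1/(n:ℝ))
      have := hdesc
      linarith
    refine le_trans (add_le_add_left hstep
      ((2/α - 1/α^2)/(2*μ*(n:ℝ)^2) * ‖Sg + (f' j w - f' j (φ j))‖^2)) (le_of_eq ?_)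
    have e1 : (⟪f' j w, (bar + (1/(n:ℝ)) • (w - φ j)) - w⟫ : ℝ)
        = ⟪f' j w, bar - w⟫ + ⟪f' j w, (1/(n:ℝ)) • (w - φ j)⟫ := by
      rw [← inner_add_right]; congr 1; abel
    have e2 : (⟪f' j (φ j), (bar + (1/(n:ℝ)) • (w - φ j)) - φ j⟫ : ℝ)
        = ⟪f' j (φ j), bar - φ j⟫ + ⟪f' j (φ j), (1/(n:ℝ)) • (w - φ j)⟫ := by
      rw [← inner_add_right]; congr 1; abel
    have e3 : ‖(1/(n:ℝ)) • (w - φ j)‖^2 = (1/(n:ℝ))^2 * ‖w - φ j‖^2 := by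
      rw [norm_smul, Real.norm_eq_abs, mul_pow, sq_abs]
    rw [e1, e2, e3]
    field_simp
    ring
  -- sum the per-update bounds
  have hsum1 := Finset.sum_le_sum (fun j (_ : j ∈ Finset.univ) => hTj j)
  -- compute the sum of the right hand sides
  have p1 : ∀ c : ℝ, ∑ _j : Fin n, c = (n:ℝ) * c := by
    intro c
    rw [Finset.sum_const, Finset.card_univ, Fintype.card_fin, nsmul_eq_mul]
  have p4s : ∑ j : Fin n, (1/(n:ℝ)) * (⟪Sfb, (1/(n:ℝ)) • (w - φ j)⟫ : ℝ)
      = (1/(n:ℝ)) * (-(1/(α*μ*(n:ℝ)) * p5)) := by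
    rw [← Finset.mul_sum, ← inner_sum, hvsum, eSfbwb]
  have p5s : ∑ j : Fin n, (1/(n:ℝ)) * (⟪Sg, (1/(n:ℝ)) • (w - φ j)⟫ : ℝ)
      = (1/(n:ℝ)) * (-(1/(α*μ*(n:ℝ)) * E2)) := by
    rw [← Finset.mul_sum, ← inner_sum, hvsum, eSgwb]
  have p6s : ∑ j : Fin n, (L/(2*(n:ℝ)^2)) * ‖w - φ j‖^2 = (L/(2*(n:ℝ)^2)) * SD := by
    rw [← Finset.mul_sum, ← hSD]
  have p7s : ∑ j : Fin n, (1/(n:ℝ)) * (f j w - f j (φ j)) = (1/(n:ℝ)) * (SFw - SF) := by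
    rw [← Finset.mul_sum, Finset.sum_sub_distrib, ← hSFw, ← hSF]
  have p8s : ∑ j : Fin n, (1/(n:ℝ)) * (⟪f' j w, bar - w⟫ : ℝ)
      = (1/(n:ℝ)) * ((1/(α*μ*(n:ℝ))) * p4) := by
    rw [← Finset.mul_sum, ← sum_inner, ← hSh, eShbw]
  have p9s : ∑ j : Fin n, (1/(n:ℝ)) * (⟪f' j w, (1/(n:ℝ)) • (w - φ j)⟫ : ℝ)
      = (1/(n:ℝ)) * ((1/(n:ℝ)) * q2) := by
    have h0 : ∀ j : Fin n, (⟪f' j w, (1/(n:ℝ)) • (w - φ j)⟫ : ℝ)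
        = (1/(n:ℝ)) * ⟪f' j w, w - φ j⟫ := fun j => real_inner_smul_right _ _ _
    rw [← Finset.mul_sum, Finset.sum_congr rfl (fun j _ => h0 j), ← Finset.mul_sum, ← hq2]
  have p10s : ∑ j : Fin n, (1/(n:ℝ)) * (⟪f' j (φ j), bar - φ j⟫ : ℝ)
      = (1/(n:ℝ)) * q1 := by
    rw [← Finset.mul_sum, ← hq1]
  have p11s : ∑ j : Fin n, (1/(n:ℝ)) * (⟪f' j (φ j), (1/(n:ℝ)) • (w - φ j)⟫ : ℝ)
      = (1/(n:ℝ)) * ((1/(n:ℝ)) * q6) := by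
    have h0 : ∀ j : Fin n, (⟪f' j (φ j), (1/(n:ℝ)) • (w - φ j)⟫ : ℝ)
        = (1/(n:ℝ)) * ⟪f' j (φ j), w - φ j⟫ := fun j => real_inner_smul_right _ _ _
    rw [← Finset.mul_sum, Finset.sum_congr rfl (fun j _ => h0 j), ← Finset.mul_sum, ← hq6]
  have p12s : ∑ j : Fin n, (2/α - 1/α^2)/(2*μ*(n:ℝ)^2) * ‖Sg + (f' j w - f' j (φ j))‖^2
      = (2/α - 1/α^2)/(2*μ*(n:ℝ)^2) * ((n:ℝ)*E2 + 2*(p4 - E2) + Y) := by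
    rw [← Finset.mul_sum]
    congr 1
    have h0 : ∀ j : Fin n, ‖Sg + (f' j w - f' j (φ j))‖^2
        = E2 + 2 * ⟪Sg, f' j w - f' j (φ j)⟫ + ‖f' j w - f' j (φ j)‖^2 := by
      intro j; rw [norm_add_sq_real, ← hE2]
    rw [Finset.sum_congr rfl (fun j _ => h0 j), Finset.sum_add_distrib,
      Finset.sum_add_distrib, p1, ← Finset.mul_sum, ← inner_sum, ← hYdef]
    have hΔsum : ∑ j : Fin n, (f' j w - f' j (φ j)) = Sh - Sg := by
      rw [Finset.sum_sub_distrib, ← hSh, ← hSgdef]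
    have ep4 : (⟪Sg, Sh⟫ : ℝ) = p4 := by
      rw [hp4]
      exact real_inner_comm Sh Sg
    rw [hΔsum, inner_sub_right, real_inner_self_eq_norm_sq, ← hE2, ep4]
  set U : ℝ := SFbar - SF - q1
      + (1/(n:ℝ)) * (-(1/(α*μ*(n:ℝ)) * p5))
      - (1/(n:ℝ)) * (-(1/(α*μ*(n:ℝ)) * E2))
      + (L/(2*(n:ℝ)^2)) * SD
      - (1/(n:ℝ)) * (SFw - SF)
      - (1/(n:ℝ)) * ((1/(α*μ*(n:ℝ))) * p4)
      - (1/(n:ℝ)) * ((1/(n:ℝ)) * q2)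
      + (1/(n:ℝ)) * q1
      + (1/(n:ℝ)) * ((1/(n:ℝ)) * q6)
      + (2/α - 1/α^2)/(2*μ*(n:ℝ)^2) * ((n:ℝ)*E2 + 2*(p4 - E2) + Y) with hUdef
  have hUsum : ∑ j : Fin n, ((1/(n:ℝ))*SFbar - (1/(n:ℝ))*SF - (1/(n:ℝ))*q1
        + (1/(n:ℝ)) * ⟪Sfb, (1/(n:ℝ)) • (w - φ j)⟫
        - (1/(n:ℝ)) * ⟪Sg, (1/(n:ℝ)) • (w - φ j)⟫
        + (L/(2*(n:ℝ)^2)) * ‖w - φ j‖^2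
        - (1/(n:ℝ)) * (f j w - f j (φ j))
        - (1/(n:ℝ)) * (⟪f' j w, bar - w⟫ : ℝ)
        - (1/(n:ℝ)) * (⟪f' j w, (1/(n:ℝ)) • (w - φ j)⟫ : ℝ)
        + (1/(n:ℝ)) * (⟪f' j (φ j), bar - φ j⟫ : ℝ)
        + (1/(n:ℝ)) * (⟪f' j (φ j), (1/(n:ℝ)) • (w - φ j)⟫ : ℝ)
        + (2/α - 1/α^2)/(2*μ*(n:ℝ)^2) * ‖Sg + (f' j w - f' j (φ j))‖^2) = U := by
    simp only [Finset.sum_add_distrib, Finset.sum_sub_distrib]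
    rw [p1, p1, p1, p4s, p5s, p6s, p7s, p8s, p9s, p10s, p11s, p12s, hUdef]
    field_simp
    try ring
  have hsumU : ∑ j, finitoT d n α μ f f' (Function.update φ j w) ≤ U := by
    rw [← hUsum]; exact hsum1
  -- scalar facts
  have hbig' : β * L ≤ μ * (n:ℝ) := by
    rw [div_le_iff₀ hμ] at hbig; linarith only [hbig]
  have hainv : 1/α ≤ 1/2 := by
    rw [div_le_div_iff₀ hα0 two_pos]; linarith only [hα]
  have hainv0 : (0:ℝ) < 1/α := by positivity
  have hsqa : 1/α^2 = (1/α)^2 := by rw [div_pow, one_pow]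
  have h2a : 2/α = 2*(1/α) := by ring
  have hk0 : 0 ≤ 2/α - 1/α^2 := by
    rw [hsqa, h2a]
    linarith only [mul_nonneg hainv0.le (sub_nonneg.mpr hainv), hainv0]
  have hk1 : 2/α - 1/α^2 ≤ 1 := by
    rw [hsqa, h2a]
    linarith only [sq_nonneg (1/α - 1)]
  have hkcond : 2/α - 1/α^2 ≤ β * (1 - 1/α) := by
    have h : β * (1 - 1/α) = β - β/α := by ring
    linarith only [hcond, h]
  have hLμn : L/μ ≤ (n:ℝ)/2 := by
    rw [div_le_div_iff₀ hμ two_pos]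
    linarith only [hbig', mul_nonneg (sub_nonneg.mpr hβ) hL0.le]
  have hg1 : 0 ≤ (1 - 1/α)/(n:ℝ) := by
    apply div_nonneg _ hN.le; linarith only [hainv]
  have hg2 : 0 ≤ 1/(n:ℝ) := by positivity
  have hone : 0 ≤ 1 - 1/α := by linarith only [hainv]
  have hc3 : 0 ≤ (1 - 1/α)/(n:ℝ) - (2/α - 1/α^2)*(L - μ)/(μ*(n:ℝ)^2) := by
    have h1 : (2/α - 1/α^2)*(L - μ) ≤ (2/α - 1/α^2)*L := by
      linarith only [mul_nonneg hk0 hμ.le]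
    have h2 : (2/α - 1/α^2)*L ≤ β*(1 - 1/α)*L := by
      linarith only [mul_nonneg (sub_nonneg.mpr hkcond) hL0.le]
    have h4 : (1 - 1/α)*(β*L) ≤ (1 - 1/α)*(μ*(n:ℝ)) :=
      mul_le_mul_of_nonneg_left hbig' hone
    have hnum : (2/α - 1/α^2)*(L - μ) ≤ (1 - 1/α)*(μ*(n:ℝ)) := by
      linarith only [h1, h2, h4]
    have heq : (1 - 1/α)/(n:ℝ) - (2/α - 1/α^2)*(L - μ)/(μ*(n:ℝ)^2)
        = ((1 - 1/α)*(μ*(n:ℝ)) - (2/α - 1/α^2)*(L - μ))/(μ*(n:ℝ)^2) := by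
      field_simp
    rw [heq]
    apply div_nonneg _ (by positivity)
    linarith only [hnum]
  have hc4 : 0 ≤ (1 - (2/α - 1/α^2))/(n:ℝ)^2 := by
    apply div_nonneg _ (by positivity); linarith only [hk1]
  have hg3 : 0 ≤ (1 - 1/α)/(n:ℝ) - (2/α - 1/α^2)*(L - μ)/(μ*(n:ℝ)^2)
      + (1 - (2/α - 1/α^2))/(n:ℝ)^2 := add_nonneg hc3 hc4
  have hc5 : 0 ≤ (2/α - 1/α^2)/(2*μ*(n:ℝ)^2) := div_nonneg hk0 (by positivity)
  have hc6 : 0 ≤ (μ/(2*(n:ℝ)^2)) * ((1 - 1/α)*(n:ℝ) + 2 - (2/α - 1/α^2) - L/μ) := by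
    apply mul_nonneg (by positivity)
    have h5 : (1/2)*(n:ℝ) ≤ (1 - 1/α)*(n:ℝ) :=
      mul_le_mul_of_nonneg_right (by linarith only [hainv]) hN.le
    linarith only [h5, hLμn, hk1]
  have hG1 : 0 ≤ SFbar - (SFw + 1/(α*μ*(n:ℝ))*p4
      + (n:ℝ)*(μ/2*((1/(α*μ*(n:ℝ)))^2*E2))) := by linarith only [hJ1]
  have hG2 : 0 ≤ SFw - (SFbar - 1/(α*μ*(n:ℝ))*p5
      + (n:ℝ)*(μ/2*((1/(α*μ*(n:ℝ)))^2*E2))) := by linarith only [hJ2]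
  have hG3 : 0 ≤ SFw - SF - q6 - μ/2*SD := by linarith only [hJ3]
  have hG4 : 0 ≤ SF - SFw + q2 - μ/2*SD := by linarith only [hJ4]
  have hG5 : 0 ≤ 2*(L-μ)*(SFw - SF - q6 - μ/2*SD) - Z := by linarith only [hJ5]
  have expand : ((n:ℝ) - 1/α) * (finitoT d n α μ f f' φ) - U
      = ((1 - 1/α)/(n:ℝ)) * (SFbar - (SFw + 1/(α*μ*(n:ℝ))*p4
            + (n:ℝ)*(μ/2*((1/(α*μ*(n:ℝ)))^2*E2))))
        + (1/(n:ℝ)) * (SFw - (SFbar - 1/(α*μ*(n:ℝ))*p5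
            + (n:ℝ)*(μ/2*((1/(α*μ*(n:ℝ)))^2*E2))))
        + ((1 - 1/α)/(n:ℝ) - (2/α - 1/α^2)*(L - μ)/(μ*(n:ℝ)^2)
            + (1 - (2/α - 1/α^2))/(n:ℝ)^2) * (SFw - SF - q6 - μ/2*SD)
        + ((1 - (2/α - 1/α^2))/(n:ℝ)^2) * (SF - SFw + q2 - μ/2*SD)
        + ((2/α - 1/α^2)/(2*μ*(n:ℝ)^2)) * (2*(L-μ)*(SFw - SF - q6 - μ/2*SD) - Z)
        + ((μ/(2*(n:ℝ)^2)) * ((1 - 1/α)*(n:ℝ) + 2 - (2/α - 1/α^2) - L/μ)) * SD := by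
    rw [hT, hUdef, hYid, hq6id]
    field_simp
    ring
  have hrhs0 : 0 ≤ ((n:ℝ) - 1/α) * (finitoT d n α μ f f' φ) - U := by
    rw [expand]
    exact add_nonneg (add_nonneg (add_nonneg (add_nonneg (add_nonneg
      (mul_nonneg hg1 hG1) (mul_nonneg hg2 hG2)) (mul_nonneg hg3 hG3))
      (mul_nonneg hc4 hG4)) (mul_nonneg hc5 hG5)) (mul_nonneg hc6 hSD0)
  have hfinal : ∑ j, finitoT d n α μ f f' (Function.update φ j w)
      ≤ ((n:ℝ) - 1/α) * (finitoT d n α μ f f' φ) :=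
    hsumU.trans (sub_nonneg.mp hrhs0)
  have hgoal := mul_le_mul_of_nonneg_left hfinal hg2
  have heq2 : (1/(n:ℝ)) * (((n:ℝ) - 1/α) * (finitoT d n α μ f f' φ))
      = finitoT d n α μ f f' φ - (1/(α*(n:ℝ))) * (finitoT d n α μ f f' φ) := by
    field_simp
  have heq3 : -(1/(α*(n:ℝ))) * (finitoT d n α μ f f' φ)
      = -((1/(α*(n:ℝ))) * (finitoT d n α μ f f' φ)) := by ring
  linarith only [hgoal, heq2]
end

section
/- For any constant α ≥ 1 and any table φ_1, …, φ_n ∈ ℝ^d, the Finito Lyapunov value T bounds the function suboptimality at the table average: f(φ̄) − f(w*) ≤ α T. -/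
open scoped RealInnerProductSpace

set_option maxHeartbeats 1000000 in
theorem finito_lyapunov_bounds_suboptimality (d n : ℕ) (hn : 1 ≤ n) (μ L α : ℝ)
    (hμ : 0 < μ) (hμL : μ ≤ L) (hα : 1 ≤ α)
    (f : Fin n → EuclideanSpace ℝ (Fin d) → ℝ)
    (f' : Fin n → EuclideanSpace ℝ (Fin d) → EuclideanSpace ℝ (Fin d))
    (hgrad : ∀ i x, HasGradientAt (f i) (f' i x) x)
    (hsmooth : ∀ i x y, ‖f' i x - f' i y‖ ≤ L * ‖x - y‖)
    (hsc : ∀ i x y, f i x ≥ f i y + ⟪f' i y, x - y⟫ + μ / 2 * ‖x - y‖ ^ 2)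
    (wstar : EuclideanSpace ℝ (Fin d))
    (hstar : ∀ x, (1 / (n : ℝ)) * ∑ i, f i wstar ≤ (1 / (n : ℝ)) * ∑ i, f i x)
    (φ : Fin n → EuclideanSpace ℝ (Fin d)) :
    (1 / (n : ℝ)) * ∑ i, f i ((1 / (n : ℝ)) • ∑ i', φ i')
        - (1 / (n : ℝ)) * ∑ i, f i wstar
      ≤ α * finitoT d n α μ f f' φ := by
  have hn0 : (0:ℝ) < n := by exact_mod_cast hn
  have hn' : (n:ℝ) ≠ 0 := ne_of_gt hn0
  have hα0 : (0:ℝ) < α := lt_of_lt_of_le one_pos hα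
  set Φ : EuclideanSpace ℝ (Fin d) := (1 / (n:ℝ)) • ∑ i, φ i with hΦdef
  set G : EuclideanSpace ℝ (Fin d) := (1 / (n:ℝ)) • ∑ i, f' i (φ i) with hGdef
  have hsumφ : ∑ i, φ i = (n:ℝ) • Φ := by
    rw [hΦdef, smul_smul]; rw [mul_one_div, div_self hn', one_smul]
  have hsumg : ∑ i, f' i (φ i) = (n:ℝ) • G := by
    rw [hGdef, smul_smul]; rw [mul_one_div, div_self hn', one_smul]
  -- the Finito point in terms of Φ and G
  have hwΦ : finitoW d n α μ f' φ - Φ = -((1/(α*μ)) • G) := by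
    rw [finitoW, ← hΦdef, hsumg, smul_smul]
    have h : 1 / (α * μ * n) * n = 1 / (α * μ) := by field_simp
    rw [h, sub_sub_cancel_left]
  -- sum expansion for inner products
  have hInner : ∀ v : EuclideanSpace ℝ (Fin d),
      ∑ i, ⟪f' i (φ i), v - φ i⟫
        = (n:ℝ) * ⟪G, v - Φ⟫ + ∑ i, ⟪f' i (φ i), Φ - φ i⟫ := by
    intro v
    have h1 : (n:ℝ) * ⟪G, v - Φ⟫ = ∑ i, ⟪f' i (φ i), v - Φ⟫ := by
      rw [← real_inner_smul_left, ← hsumg, sum_inner]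
    rw [h1, ← Finset.sum_add_distrib]
    refine Finset.sum_congr rfl fun i _ => ?_
    rw [← inner_add_right]
    congr 1
    abel
  -- sum expansion for squared norms
  have hNorm : ∀ v : EuclideanSpace ℝ (Fin d),
      ∑ i, ‖v - φ i‖^2 = (n:ℝ) * ‖v - Φ‖^2 + ∑ i, ‖Φ - φ i‖^2 := by
    intro v
    have hc : ∑ i, ⟪v - Φ, Φ - φ i⟫ = 0 := by
      rw [← inner_sum]
      have hz : ∑ i, (Φ - φ i) = (0 : EuclideanSpace ℝ (Fin d)) := by
        rw [Finset.sum_sub_distrib, hsumφ]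
        simp [Finset.sum_const, Nat.cast_smul_eq_nsmul]
      rw [hz, inner_zero_right]
    have expand : ∀ i : Fin n,
        ‖v - φ i‖^2 = ‖v - Φ‖^2 + 2*⟪v - Φ, Φ - φ i⟫ + ‖Φ - φ i‖^2 := by
      intro i
      have h := norm_add_sq_real (v - Φ) (Φ - φ i)
      have he : v - Φ + (Φ - φ i) = v - φ i := by abel
      rw [he] at h; linarith
    calc ∑ i, ‖v - φ i‖^2
        = ∑ i, (‖v - Φ‖^2 + 2*⟪v - Φ, Φ - φ i⟫ + ‖Φ - φ i‖^2) :=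
          Finset.sum_congr rfl fun i _ => expand i
      _ = (n:ℝ)*‖v-Φ‖^2 + 2*(∑ i, ⟪v - Φ, Φ - φ i⟫) + ∑ i, ‖Φ - φ i‖^2 := by
          rw [Finset.sum_add_distrib, Finset.sum_add_distrib, Finset.sum_const,
            ← Finset.mul_sum]
          simp [Nat.cast_smul_eq_nsmul, nsmul_eq_mul]
      _ = _ := by rw [hc]; ring
  -- scalar abbreviations
  set A : ℝ := ∑ i, f i Φ with hA
  set F : ℝ := ∑ i, f i (φ i) with hF
  set P : ℝ := ∑ i, ⟪f' i (φ i), Φ - φ i⟫ with hP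
  set S : ℝ := ∑ i, ‖Φ - φ i‖^2 with hS
  set G2 : ℝ := ‖G‖^2 with hG2
  set W : ℝ := ∑ i, f i wstar with hW
  have hiw : ⟪G, finitoW d n α μ f' φ - Φ⟫ = -((1/(α*μ)) * G2) := by
    rw [hwΦ, inner_neg_right, real_inner_smul_right, real_inner_self_eq_norm_sq, hG2]
  have hnw : ‖finitoW d n α μ f' φ - Φ‖^2 = (1/(α*μ))^2 * G2 := by
    rw [hwΦ, norm_neg, norm_smul, mul_pow, Real.norm_eq_abs, sq_abs, hG2]
  have hSnn : 0 ≤ S := Finset.sum_nonneg fun i _ => sq_nonneg _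
  have hG2nn : 0 ≤ G2 := sq_nonneg _
  -- the Lyapunov value in scalar form
  have hT : finitoT d n α μ f f' φ
      = (1/(n:ℝ))*(A - F - P) + (1/(α*μ))*G2 - (1/(2*α^2*μ))*G2 := by
    rw [finitoT, ← hΦdef, hInner (finitoW d n α μ f' φ),
      hNorm (finitoW d n α μ f' φ), hiw, hnw, ← hA, ← hF, ← hS]
    field_simp
    ring
  -- strong convexity at Φ
  have hD : F + P + (μ/2)*S ≤ A := by
    have hsum := Finset.sum_le_sum (s := Finset.univ)
      (fun i (_ : i ∈ Finset.univ) => hsc i Φ (φ i))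
    rw [Finset.sum_add_distrib, Finset.sum_add_distrib, ← Finset.mul_sum] at hsum
    rw [hA, hF, hP, hS]
    linarith [hsum]
  -- strong convexity at wstar
  have hQ : F + ((n:ℝ) * ⟪G, wstar - Φ⟫ + P) + (μ/2)*((n:ℝ)*‖wstar - Φ‖^2 + S) ≤ W := by
    have hsum := Finset.sum_le_sum (s := Finset.univ)
      (fun i (_ : i ∈ Finset.univ) => hsc i wstar (φ i))
    rw [Finset.sum_add_distrib, Finset.sum_add_distrib, ← Finset.mul_sum,
      hInner wstar, hNorm wstar] at hsum
    rw [hW, hF]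
    linarith [hsum]
  -- completing the square
  have hSq : 0 ≤ ‖wstar - Φ‖^2 + 2*((1/μ)*⟪wstar - Φ, G⟫) + (1/μ)^2 * G2 := by
    have h := norm_add_sq_real (wstar - Φ) ((1/μ) • G)
    rw [real_inner_smul_right, norm_smul, mul_pow, Real.norm_eq_abs, sq_abs, ← hG2] at h
    nlinarith [sq_nonneg (‖wstar - Φ + (1/μ) • G‖)]
  have hsymm : ⟪wstar - Φ, G⟫ = ⟪G, wstar - Φ⟫ := real_inner_comm _ _
  rw [hsymm] at hSq
  set c1 : ℝ := ⟪G, wstar - Φ⟫ with hc1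
  set c2 : ℝ := ‖wstar - Φ‖^2 with hc2
  have hc2nn : 0 ≤ c2 := sq_nonneg _
  -- bound A - W
  have hAW : A - W ≤ (A - F - P) + ((n:ℝ)/(2*μ))*G2 := by
    have h1 : 0 ≤ (n:ℝ) * μ / 2 * (c2 + 2*((1/μ)*c1) + (1/μ)^2 * G2) := by
      have hpos : (0:ℝ) ≤ (n:ℝ) * μ / 2 := by positivity
      exact mul_nonneg hpos hSq
    have h2 : (n:ℝ) * μ / 2 * (c2 + 2*((1/μ)*c1) + (1/μ)^2 * G2)
        = (μ*(n:ℝ)/2)*c2 + (n:ℝ)*c1 + ((n:ℝ)/(2*μ))*G2 := by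
      field_simp
    rw [h2] at h1
    nlinarith [hQ, hSnn, hμ.le]
  -- step 1
  have step1 : (1/(n:ℝ))*A - (1/(n:ℝ))*W ≤ (1/(n:ℝ))*(A - F - P) + G2/(2*μ) := by
    have h := mul_le_mul_of_nonneg_left hAW (by positivity : (0:ℝ) ≤ 1/(n:ℝ))
    have h2 : (1/(n:ℝ))*((A - F - P) + ((n:ℝ)/(2*μ))*G2)
        = (1/(n:ℝ))*(A - F - P) + G2/(2*μ) := by field_simp
    rw [h2] at h
    linarith [h]
  -- step 2
  have hE : 0 ≤ A - F - P := by nlinarith [hD, hSnn, hμ.le]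
  have hα1 : (0:ℝ) ≤ α - 1 := by linarith
  have h1 : 0 ≤ ((α-1)/(n:ℝ))*(A - F - P) :=
    mul_nonneg (div_nonneg hα1 hn0.le) hE
  have h2 : 0 ≤ ((α-1)/(2*α*μ))*G2 :=
    mul_nonneg (div_nonneg hα1 (by positivity)) hG2nn
  have key : α * finitoT d n α μ f f' φ
      - ((1/(n:ℝ))*(A - F - P) + G2/(2*μ))
      = ((α-1)/(n:ℝ))*(A - F - P) + ((α-1)/(2*α*μ))*G2 := by
    rw [hT]
    field_simp
    ring
  linarith [step1, h1, h2, key]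
end

section
/- Let f : ℝ^d → ℝ be differentiable, L-smooth and μ-strongly convex with 0 < μ < L, and let l : ℝ^d → ℝ be a quadratic with curvature μ (i.e. l(x) = l(y) + ⟨∇l(y), x − y⟩ + (μ/2)‖x − y‖² for all x, y) such that l(x) ≤ f(x) for all x. Fix w ∈ ℝ^d, put δ = f(w) − l(w), fix a unit vector r, and set v = w + √(2δ/(L−μ)) r and b(x) = l(v) + ⟨∇l(v), x − v⟩ + (L/2)‖x − v‖². Then for every point x = w + t r with 0 ≤ t ≤ √(2δ/(L−μ)) one has f(x) ≥ b(x) and b(x) − l(x) = ((L−μ)/2)‖x − v‖² ≥ 0; in particular f(w) − l(w) = ((L−μ)/2)‖w − v‖². -/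
open Set Filter

lemma hasDerivAt_quad (a b c x : ℝ) :
    HasDerivAt (fun y : ℝ => a + b * y + c * y ^ 2) (b + 2 * c * x) x := by
  have h2 : HasDerivAt (fun y : ℝ => b * y) b x := by
    simpa using (hasDerivAt_id x).const_mul b
  have h3 : HasDerivAt (fun y : ℝ => c * y ^ 2) (2 * c * x) x := by
    have := (hasDerivAt_pow 2 x).const_mul c
    exact this.congr_deriv (by ring)
  exact (((hasDerivAt_const x a).add h2).add h3).congr_deriv (by ring)

lemma descent1d (K : ℝ) (hK : 0 < K) (φ φ' : ℝ → ℝ)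
    (hd : ∀ t, HasDerivAt φ (φ' t) t)
    (hmono : ∀ a b : ℝ, a ≤ b → 0 ≤ φ' b - φ' a)
    (hlip : ∀ a b : ℝ, a ≤ b → φ' b - φ' a ≤ K * (b - a)) :
    ∀ t u : ℝ, φ u ≤ φ t + φ' t * (u - t) + K / 2 * (u - t) ^ 2 := by
  intro t u
  set ψ : ℝ → ℝ := fun c => φ t + φ' t * (c - t) + K / 2 * (c - t) ^ 2 - φ c with hψ
  have hψd : ∀ c, HasDerivAt ψ (φ' t + K * (c - t) - φ' c) c := by
    intro c
    have heq : (fun c : ℝ => φ t + φ' t * (c - t) + K / 2 * (c - t) ^ 2) =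
        fun y : ℝ => (φ t - φ' t * t + K / 2 * t ^ 2) + (φ' t - K * t) * y + (K / 2) * y ^ 2 := by
      funext y; ring
    have hq := hasDerivAt_quad (φ t - φ' t * t + K / 2 * t ^ 2) (φ' t - K * t) (K / 2) c
    rw [← heq] at hq
    have hq' : HasDerivAt (fun c : ℝ => φ t + φ' t * (c - t) + K / 2 * (c - t) ^ 2)
        (φ' t + K * (c - t)) c := by
      convert hq using 1; ring
    exact hq'.sub (hd c)
  have hψt : ψ t = 0 := by simp [hψ]
  rcases le_total t u with h | h
  · have hm : MonotoneOn ψ (Icc t u) := by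
      apply monotoneOn_of_deriv_nonneg (convex_Icc t u)
        (fun c _ => (hψd c).continuousAt.continuousWithinAt)
        (fun c _ => (hψd c).differentiableAt.differentiableWithinAt)
      intro c hc
      rw [interior_Icc] at hc
      rw [(hψd c).deriv]
      have := hlip t c hc.1.le
      linarith
    have := hm ⟨le_refl t, h⟩ ⟨h, le_refl u⟩ h
    rw [hψt] at this
    simpa [hψ] using this
  · have hm : AntitoneOn ψ (Icc u t) := by
      apply antitoneOn_of_deriv_nonpos (convex_Icc u t)
        (fun c _ => (hψd c).continuousAt.continuousWithinAt)
        (fun c _ => (hψd c).differentiableAt.differentiableWithinAt)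
      intro c hc
      rw [interior_Icc] at hc
      rw [(hψd c).deriv]
      have h1 := hlip c t hc.2.le
      linarith
    have := hm ⟨le_refl u, h⟩ ⟨h, le_refl t⟩ h
    rw [hψt] at this
    simpa [hψ] using this

lemma grad1d (K : ℝ) (hK : 0 < K) (φ φ' : ℝ → ℝ)
    (hpos : ∀ t, 0 ≤ φ t)
    (hdesc : ∀ t u : ℝ, φ u ≤ φ t + φ' t * (u - t) + K / 2 * (u - t) ^ 2) :
    ∀ t, (φ' t) ^ 2 ≤ 2 * K * φ t := by
  intro t
  have hKne : K ≠ 0 := ne_of_gt hK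
  have hcalc : φ' t * ((t - φ' t / K) - t) + K / 2 * ((t - φ' t / K) - t) ^ 2
      = -(φ' t ^ 2) / (2 * K) := by
    field_simp
    ring
  have h1 : 0 ≤ φ t + (-(φ' t ^ 2) / (2 * K)) := by
    have := hdesc t (t - φ' t / K)
    have h0 := hpos (t - φ' t / K)
    linarith [hcalc]
  rw [neg_div] at h1
  have h2 : (φ' t ^ 2) / (2 * K) ≤ φ t := by linarith
  rw [div_le_iff₀ (by linarith : (0:ℝ) < 2 * K)] at h2
  nlinarith [h2]

lemma fence_step (K : ℝ) (hK : 0 < K) (φ φ' : ℝ → ℝ)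
    (hd : ∀ t, HasDerivAt φ (φ' t) t)
    (hgrad : ∀ t, (φ' t) ^ 2 ≤ 2 * K * φ t)
    (s₁ lam t : ℝ) (hlam : 1 < lam) (ht : 0 ≤ t) (hts : 0 ≤ s₁ - lam * t)
    (h0 : K / 2 * s₁ ^ 2 ≤ φ 0) :
    K / 2 * (s₁ - lam * t) ^ 2 ≤ φ t := by
  have hBd : ∀ x : ℝ, HasDerivAt (fun x : ℝ => K / 2 * (s₁ - lam * x) ^ 2)
      (-(lam * K) * (s₁ - lam * x)) x := by
    intro x
    have heq : (fun x : ℝ => K / 2 * (s₁ - lam * x) ^ 2) =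
        fun y : ℝ => (K / 2 * s₁ ^ 2) + (-(K * s₁ * lam)) * y + (K / 2 * lam ^ 2) * y ^ 2 := by
      funext y; ring
    have hq := hasDerivAt_quad (K / 2 * s₁ ^ 2) (-(K * s₁ * lam)) (K / 2 * lam ^ 2) x
    rw [← heq] at hq
    convert hq using 1; ring
  have fence := image_le_of_deriv_right_lt_deriv_boundary
    (f := fun x : ℝ => K / 2 * (s₁ - lam * x) ^ 2)
    (f' := fun x : ℝ => -(lam * K) * (s₁ - lam * x)) (a := 0) (b := t)
    (B := φ) (B' := φ')
    (fun x _ => (hBd x).continuousAt.continuousWithinAt)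
    (fun x _ => (hBd x).hasDerivWithinAt)
    (by simpa using h0)
    hd
    (by
      intro x hx hBφ
      have hxt : x < t := hx.2
      have hx0 : 0 ≤ x := hx.1
      have hpos' : 0 < s₁ - lam * x := by nlinarith
      have hg := hgrad x
      rw [← hBφ] at hg
      have hg' : (φ' x) ^ 2 ≤ (K * (s₁ - lam * x)) ^ 2 := by
        have : 2 * K * (K / 2 * (s₁ - lam * x) ^ 2) = (K * (s₁ - lam * x)) ^ 2 := by ring
        linarith
      have hlow : -(K * (s₁ - lam * x)) ≤ φ' x := by
        nlinarith [sq_nonneg (φ' x + K * (s₁ - lam * x)), mul_pos hK hpos']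
      show -(lam * K) * (s₁ - lam * x) < φ' x
      have hstrict : -(lam * K) * (s₁ - lam * x) < -(K * (s₁ - lam * x)) := by
        nlinarith [mul_pos (mul_pos (by linarith : (0:ℝ) < lam - 1) hK) hpos']
      linarith)
  exact fence ⟨ht, le_refl t⟩

lemma fence1d (K s : ℝ) (hK : 0 < K) (hs : 0 ≤ s) (φ φ' : ℝ → ℝ)
    (hd : ∀ t, HasDerivAt φ (φ' t) t)
    (hpos : ∀ t, 0 ≤ φ t)
    (hgrad : ∀ t, (φ' t) ^ 2 ≤ 2 * K * φ t)
    (h0 : φ 0 = K / 2 * s ^ 2) :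
    ∀ t, 0 ≤ t → t ≤ s → K / 2 * (s - t) ^ 2 ≤ φ t := by
  intro t ht hts
  rcases eq_or_lt_of_le hts with rfl | hlt
  · simpa using hpos t
  have hspos : 0 < s := lt_of_le_of_lt ht hlt
  have hq : 0 < (s - t) / (1 + t) := div_pos (by linarith) (by linarith)
  have key : ∀ ε : ℝ, 0 < ε → ε < min s ((s - t) / (1 + t)) →
      K / 2 * ((s - ε) - (1 + ε) * t) ^ 2 ≤ φ t := by
    intro ε hε hεlt
    have hεs : ε ≤ s := le_of_lt (lt_of_lt_of_le hεlt (min_le_left _ _))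
    have h1 : ε ≤ (s - t) / (1 + t) := le_of_lt (lt_of_lt_of_le hεlt (min_le_right _ _))
    have h2 : (0:ℝ) < 1 + t := by linarith
    rw [le_div_iff₀ h2] at h1
    have hεt : 0 ≤ (s - ε) - (1 + ε) * t := by nlinarith
    exact fence_step K hK φ φ' hd hgrad (s - ε) (1 + ε) t (by linarith) ht hεt
      (by
        rw [h0]
        nlinarith [mul_nonneg (mul_nonneg hK.le hε.le) (by linarith : (0:ℝ) ≤ 2 * s - ε)])
  have htend : Tendsto (fun ε : ℝ => K / 2 * ((s - ε) - (1 + ε) * t) ^ 2) (nhdsWithin 0 (Ioi 0))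
      (nhds (K / 2 * (s - t) ^ 2)) := by
    have hc : Continuous (fun ε : ℝ => K / 2 * ((s - ε) - (1 + ε) * t) ^ 2) := by
      apply Continuous.mul continuous_const
      exact ((continuous_const.sub continuous_id).sub
        ((continuous_const.add continuous_id).mul continuous_const)).pow 2
    have h := hc.tendsto 0
    simp only [sub_zero, add_zero, one_mul] at h
    exact h.mono_left nhdsWithin_le_nhds
  refine le_of_tendsto htend ?_
  filter_upwards [Ioo_mem_nhdsGT_of_mem
    (Set.mem_Ico.mpr ⟨le_refl (0:ℝ), lt_min hspos hq⟩)] with ε hε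
  exact key ε hε.1 hε.2

open scoped RealInnerProductSpace
open Set Filter

theorem tight_bound_lemma (d : ℕ) (μ L : ℝ) (hμ : 0 < μ) (hμL : μ < L)
    (f l : EuclideanSpace ℝ (Fin d) → ℝ)
    (f' l' : EuclideanSpace ℝ (Fin d) → EuclideanSpace ℝ (Fin d))
    (hfgrad : ∀ x, HasGradientAt f (f' x) x)
    (hlgrad : ∀ x, HasGradientAt l (l' x) x)
    (hfsmooth : ∀ x y, ‖f' x - f' y‖ ≤ L * ‖x - y‖)
    (hfsc : ∀ x y, f x ≥ f y + ⟪f' y, x - y⟫ + μ / 2 * ‖x - y‖ ^ 2)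
    (hlquad : ∀ x y, l x = l y + ⟪l' y, x - y⟫ + μ / 2 * ‖x - y‖ ^ 2)
    (hle : ∀ x, l x ≤ f x)
    (w r : EuclideanSpace ℝ (Fin d)) (hr : ‖r‖ = 1)
    (v : EuclideanSpace ℝ (Fin d))
    (hv : v = w + Real.sqrt (2 * (f w - l w) / (L - μ)) • r)
    (b : EuclideanSpace ℝ (Fin d) → ℝ)
    (hb : ∀ x, b x = l v + ⟪l' v, x - v⟫ + L / 2 * ‖x - v‖ ^ 2) :
    (∀ t : ℝ, 0 ≤ t → t ≤ Real.sqrt (2 * (f w - l w) / (L - μ)) →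
      f (w + t • r) ≥ b (w + t • r) ∧
      b (w + t • r) - l (w + t • r) = (L - μ) / 2 * ‖w + t • r - v‖ ^ 2 ∧
      0 ≤ b (w + t • r) - l (w + t • r)) ∧
    f w - l w = (L - μ) / 2 * ‖w - v‖ ^ 2 := by
  have hK : 0 < L - μ := by linarith
  have hδ : 0 ≤ f w - l w := by linarith [hle w]
  set s : ℝ := Real.sqrt (2 * (f w - l w) / (L - μ)) with hsdef
  have hs0 : 0 ≤ s := Real.sqrt_nonneg _
  have hs2 : s ^ 2 = 2 * (f w - l w) / (L - μ) := by
    rw [hsdef]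
    exact Real.sq_sqrt (div_nonneg (by linarith) hK.le)
  -- line algebra
  have hsub : ∀ a c : ℝ, (w + c • r) - (w + a • r) = (c - a) • r := by
    intro a c
    rw [add_sub_add_left_eq_sub, ← sub_smul]
  have hnorm : ∀ a c : ℝ, ‖(w + c • r) - (w + a • r)‖ ^ 2 = (c - a) ^ 2 := by
    intro a c
    rw [hsub, norm_smul, Real.norm_eq_abs, hr, mul_one, sq_abs]
  -- l on the line
  have hl_line : ∀ t : ℝ, l (w + t • r) = l w + t * ⟪l' w, r⟫ + μ / 2 * t ^ 2 := by
    intro t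
    have h1 : w + t • r - w = t • r := add_sub_cancel_left w (t • r)
    rw [hlquad (w + t • r) w, h1, real_inner_smul_right, norm_smul, Real.norm_eq_abs, hr,
      mul_one, sq_abs]
  set φ : ℝ → ℝ := fun t => f (w + t • r) - (l w + t * ⟪l' w, r⟫ + μ / 2 * t ^ 2) with hφdef
  set φ' : ℝ → ℝ := fun t => ⟪f' (w + t • r), r⟫ - ⟪l' w, r⟫ - μ * t with hφ'def
  -- derivative of φ
  have hcurve : ∀ t : ℝ, HasDerivAt (fun t : ℝ => w + t • r) r t := by
    intro t
    have := ((hasDerivAt_id t).smul_const r).const_add w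
    simpa using this
  have hF : ∀ t : ℝ, HasDerivAt (fun t : ℝ => f (w + t • r)) ⟪f' (w + t • r), r⟫ t := by
    intro t
    have h := (hfgrad (w + t • r)).hasFDerivAt.comp_hasDerivAt t (hcurve t)
    simpa [InnerProductSpace.toDual_apply_apply, Function.comp_def] using h
  have hd : ∀ t : ℝ, HasDerivAt φ (φ' t) t := by
    intro t
    have hq : HasDerivAt (fun t : ℝ => l w + t * ⟪l' w, r⟫ + μ / 2 * t ^ 2)
        (⟪l' w, r⟫ + μ * t) t := by
      have := hasDerivAt_quad (l w) ⟪l' w, r⟫ (μ / 2) t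
      have heq : (fun y : ℝ => l w + ⟪l' w, r⟫ * y + μ / 2 * y ^ 2) =
          (fun t : ℝ => l w + t * ⟪l' w, r⟫ + μ / 2 * t ^ 2) := by
        funext y; ring
      rw [heq] at this
      convert this using 1
      ring
    have := (hF t).sub hq
    exact this.congr_deriv (by simp only [hφ'def]; ring)
  -- nonnegativity
  have hpos : ∀ t : ℝ, 0 ≤ φ t := by
    intro t
    have := hle (w + t • r)
    simp only [hφdef]
    rw [← hl_line t]
    linarith
  -- value at 0
  have h0' : φ 0 = f w - l w := by
    simp [hφdef]
  have h0 : φ 0 = (L - μ) / 2 * s ^ 2 := by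
    rw [h0', hs2]
    field_simp
  -- Lipschitz and monotone for φ'
  have hlip : ∀ a c : ℝ, a ≤ c → φ' c - φ' a ≤ (L - μ) * (c - a) := by
    intro a c hac
    have h2 := hfsmooth (w + c • r) (w + a • r)
    rw [hsub, norm_smul, Real.norm_eq_abs, hr, mul_one, abs_of_nonneg (by linarith)] at h2
    have h1 : ⟪f' (w + c • r) - f' (w + a • r), r⟫ ≤ L * (c - a) := by
      calc ⟪f' (w + c • r) - f' (w + a • r), r⟫
          ≤ ‖f' (w + c • r) - f' (w + a • r)‖ * ‖r‖ := real_inner_le_norm _ _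
        _ = ‖f' (w + c • r) - f' (w + a • r)‖ := by rw [hr, mul_one]
        _ ≤ L * (c - a) := h2
    have h3 : φ' c - φ' a = ⟪f' (w + c • r) - f' (w + a • r), r⟫ - μ * (c - a) := by
      simp only [hφ'def, inner_sub_left]
      ring
    linarith
  have hmono : ∀ a c : ℝ, a ≤ c → 0 ≤ φ' c - φ' a := by
    intro a c hac
    rcases eq_or_lt_of_le hac with rfl | h
    · simp
    have hx := hfsc (w + c • r) (w + a • r)
    have hy := hfsc (w + a • r) (w + c • r)
    rw [hsub, real_inner_smul_right, norm_smul, Real.norm_eq_abs, hr, mul_one, sq_abs] at hx hy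
    have h3 : φ' c - φ' a = ⟪f' (w + c • r), r⟫ - ⟪f' (w + a • r), r⟫ - μ * (c - a) := by
      simp only [hφ'def]
      ring
    by_contra hcon
    push_neg at hcon
    have hca : 0 < c - a := by linarith
    nlinarith [mul_pos hca (by linarith : 0 < -(φ' c - φ' a))]
  -- chain the 1-D lemmas
  have hdesc := descent1d (L - μ) hK φ φ' hd hmono hlip
  have hgrad := grad1d (L - μ) hK φ φ' hpos hdesc
  have hfence := fence1d (L - μ) s hK hs0 φ φ' hd hpos hgrad h0
  -- assemble
  constructor
  · intro t ht hts
    have hxv : w + t • r - v = (t - s) • r := by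
      rw [hv, hsub]
    have hxv2 : ‖w + t • r - v‖ ^ 2 = (s - t) ^ 2 := by
      rw [hxv, norm_smul, Real.norm_eq_abs, hr, mul_one, sq_abs]
      ring
    have hbl : b (w + t • r) - l (w + t • r) = (L - μ) / 2 * ‖w + t • r - v‖ ^ 2 := by
      have e1 := hb (w + t • r)
      have e2 := hlquad (w + t • r) v
      linarith
    refine ⟨?_, hbl, ?_⟩
    · have hφt := hfence t ht hts
      have hflx : f (w + t • r) - l (w + t • r) = φ t := by
        simp only [hφdef]
        rw [hl_line t]
      have : (L - μ) / 2 * ‖w + t • r - v‖ ^ 2 ≤ f (w + t • r) - l (w + t • r) := by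
        rw [hxv2, hflx]
        exact hφt
      linarith
    · rw [hbl]
      positivity
  · have hwv : ‖w - v‖ ^ 2 = s ^ 2 := by
      have : w - v = (0 - s) • r := by
        rw [hv, zero_sub, neg_smul]
        abel
      rw [this, norm_smul, Real.norm_eq_abs, hr, mul_one, sq_abs]
      ring
    rw [hwv, hs2]
    field_simp
end
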